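/- If ρ = ∑_k p_k A_k ⊗ B_k is a separable density matrix on C^{d_A} ⊗ C^{d_B} (with p_k ≥ 0 summing to 1 and A_k, B_k density matrices), then the trace norm of its realignment satisfies ‖R(ρ)‖₁ ≤ 1. Hence ‖R(ρ)‖₁ > 1 implies ρ is entangled (the CCNR criterion). -/

import Mathlib

open Matrix Kronecker
open scoped ComplexOrder

/-- The realignment map for a bipartite matrix on `ℂ^{d_A} ⊗ ℂ^{d_B}`:
`R(ρ)_{(i,j),(k,l)} = ρ_{(i,k),(j,l)}`. -/
def realignRect (dA dB : ℕ)
    (X : Matrix (Fin dA × Fin dB) (Fin dA × Fin dB) ℂ) :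
    Matrix (Fin dA × Fin dA) (Fin dB × Fin dB) ℂ :=
  Matrix.of fun p q => X (p.1, q.1) (p.2, q.2)

/-- The positive semidefinite square root of a positive semidefinite matrix
(the former Mathlib `Matrix.PosSemidef.sqrt`, spelled out with its old definition). -/
noncomputable def posSemidefSqrt {n : Type*} [Fintype n] [DecidableEq n] {A : Matrix n n ℂ}
    (hA : A.PosSemidef) : Matrix n n ℂ :=
  hA.1.eigenvectorUnitary.1 * diagonal ((↑) ∘ (√·) ∘ hA.1.eigenvalues) *
    (star hA.1.eigenvectorUnitary : Matrix n n ℂ)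

/-- The trace norm `‖X‖₁ = Tr √(X Xᴴ)` of a (possibly rectangular) complex matrix. -/
noncomputable def traceNorm {m n : Type*} [Fintype m] [Fintype n] [DecidableEq m]
    (X : Matrix m n ℂ) : ℝ :=
  (posSemidefSqrt (Matrix.posSemidef_self_mul_conjTranspose X)).trace.re

/-- `ρ` is separable: a convex combination of products of density matrices. -/
def SeparableState (dA dB : ℕ)
    (ρ : Matrix (Fin dA × Fin dB) (Fin dA × Fin dB) ℂ) : Prop :=
  ∃ (K : ℕ) (p : Fin K → ℝ) (A : Fin K → Matrix (Fin dA) (Fin dA) ℂ)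
    (B : Fin K → Matrix (Fin dB) (Fin dB) ℂ),
    (∀ k, 0 ≤ p k) ∧ (∑ k, p k = 1) ∧
    (∀ k, (A k).PosSemidef ∧ Matrix.trace (A k) = 1) ∧
    (∀ k, (B k).PosSemidef ∧ Matrix.trace (B k) = 1) ∧
    ρ = ∑ k, ((p k : ℝ) : ℂ) • (A k ⊗ₖ B k)

namespace CCNRAux

variable {m n : Type*} [Fintype m] [Fintype n] [DecidableEq m]

lemma trace_conj_unitary {U : Matrix m m ℂ} (hU : Uᴴ * U = 1) (M : Matrix m m ℂ) :
    (U * M * Uᴴ).trace = M.trace := by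
  rw [Matrix.trace_mul_cycle, Matrix.mul_assoc, ← Matrix.mul_assoc Uᴴ, hU, Matrix.one_mul]

lemma conj_mul_conj {U : Matrix m m ℂ} (hU : Uᴴ * U = 1) (P Q : Matrix m m ℂ) :
    (U * P * Uᴴ) * (U * Q * Uᴴ) = U * (P * Q) * Uᴴ := by
  have : U * P * Uᴴ * (U * Q * Uᴴ) = U * P * (Uᴴ * U) * (Q * Uᴴ) := by
    noncomm_ring
  rw [this, hU, Matrix.mul_one, ← Matrix.mul_assoc, ← Matrix.mul_assoc]

/-- There is a contraction `Y` realizing the trace norm of `X` as `Re Tr (Yᴴ X)`. -/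
lemma exists_dual (X : Matrix m n ℂ) :
    ∃ Y : Matrix m n ℂ, (1 - Y * Yᴴ).PosSemidef ∧
      ((Yᴴ * X).trace).re = traceNorm X := by
  have hM := Matrix.posSemidef_self_mul_conjTranspose X
  set h : (X * Xᴴ).IsHermitian := hM.1 with hh
  set U : Matrix m m ℂ := (h.eigenvectorUnitary : Matrix m m ℂ) with hUdef
  set lam : m → ℝ := h.eigenvalues with hlam
  have hlam0 : ∀ i, 0 ≤ lam i := fun i => hM.eigenvalues_nonneg i
  have hUU : Uᴴ * U = 1 := by
    simpa [hUdef, Matrix.star_eq_conjTranspose] using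
      Unitary.coe_star_mul_self h.eigenvectorUnitary
  have hUU' : U * Uᴴ = 1 := by
    simpa [hUdef, Matrix.star_eq_conjTranspose] using
      Unitary.coe_mul_star_self h.eigenvectorUnitary
  have hspec : X * Xᴴ = U * Matrix.diagonal (fun i => (lam i : ℂ)) * Uᴴ := by
    exact h.spectral_theorem
  set g : m → ℝ := fun i => if lam i = 0 then 0 else (Real.sqrt (lam i))⁻¹ with hg
  set D : Matrix m m ℂ := Matrix.diagonal (fun i => (g i : ℂ)) with hD
  have hDH : Dᴴ = D := by
    simp [hD, Matrix.diagonal_conjTranspose, Function.comp]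
  set Y : Matrix m n ℂ := U * D * Uᴴ * X with hY
  have hYH : Yᴴ = Xᴴ * (U * D * Uᴴ) := by
    simp only [hY, Matrix.conjTranspose_mul, hDH, Matrix.conjTranspose_conjTranspose,
      Matrix.mul_assoc]
  -- the square root of `X * Xᴴ`
  set S : Matrix m m ℂ := U * Matrix.diagonal (fun i => ((Real.sqrt (lam i) : ℝ) : ℂ)) * Uᴴ
    with hS
  have hSps : S.PosSemidef := by
    apply Matrix.PosSemidef.mul_mul_conjTranspose_same
    refine Matrix.posSemidef_diagonal_iff.mpr fun i => ?_
    exact_mod_cast Complex.zero_le_real.mpr (Real.sqrt_nonneg _)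
  have hSsq : S ^ 2 = X * Xᴴ := by
    have hd : (Matrix.diagonal (fun i => ((Real.sqrt (lam i) : ℝ) : ℂ)) *
        Matrix.diagonal (fun i => ((Real.sqrt (lam i) : ℝ) : ℂ)))
        = Matrix.diagonal (fun i => ((lam i : ℝ) : ℂ)) := by
      have he : (fun i => ((Real.sqrt (lam i) : ℝ) : ℂ) * ((Real.sqrt (lam i) : ℝ) : ℂ))
          = fun i => ((lam i : ℝ) : ℂ) := by
        funext i
        rw [← Complex.ofReal_mul, Real.mul_self_sqrt (hlam0 i)]
      rw [Matrix.diagonal_mul_diagonal, he]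
    rw [pow_two, hS, conj_mul_conj hUU, hd, hspec]
  have hSeq : S = posSemidefSqrt hM := rfl
  have htrS : traceNorm X = ∑ i, Real.sqrt (lam i) := by
    rw [traceNorm, ← hSeq, hS, trace_conj_unitary hUU, Matrix.trace_diagonal]
    rw [← Complex.ofReal_sum]
    exact Complex.ofReal_re _
  refine ⟨Y, ?_, ?_⟩
  · -- positivity of `1 - Y Yᴴ`
    have hYY : Y * Yᴴ = U * Matrix.diagonal (fun i => ((g i * lam i * g i : ℝ) : ℂ)) * Uᴴ := by
      have : Y * Yᴴ = (U * D * Uᴴ) * ((X * Xᴴ) * (U * D * Uᴴ)) := by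
        rw [hY, hYH]; simp only [Matrix.mul_assoc]
      rw [this, hspec, ← Matrix.mul_assoc, conj_mul_conj hUU, conj_mul_conj hUU]
      congr 2
      rw [Matrix.diagonal_mul_diagonal, Matrix.diagonal_mul_diagonal]
      ext i; push_cast; ring
    have h1 : (1 : Matrix m m ℂ) - Y * Yᴴ
        = U * Matrix.diagonal (fun i => ((1 - g i * lam i * g i : ℝ) : ℂ)) * Uᴴ := by
      rw [hYY]
      have h1' : (1 : Matrix m m ℂ) = U * 1 * Uᴴ := by rw [Matrix.mul_one, hUU']
      rw [h1']
      rw [← Matrix.sub_mul, ← Matrix.mul_sub]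
      congr 2
      ext i j
      by_cases hij : i = j <;> simp [Matrix.diagonal, hij, Matrix.one_apply]
    rw [h1]
    apply Matrix.PosSemidef.mul_mul_conjTranspose_same
    refine Matrix.posSemidef_diagonal_iff.mpr fun i => ?_
    refine Complex.zero_le_real.mpr ?_
    by_cases hli : lam i = 0
    · simp [hg, hli]
    · have hpos : 0 < lam i := lt_of_le_of_ne (hlam0 i) (Ne.symm hli)
      have : g i * lam i * g i = 1 := by
        rw [hg]; simp only [hli, if_false]
        have hs : Real.sqrt (lam i) ≠ 0 := by positivity
        field_simp
        rw [Real.sq_sqrt (hlam0 i)]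
      simp [this]
  · -- the trace value
    have htr : (Yᴴ * X).trace = ∑ i, ((Real.sqrt (lam i) : ℝ) : ℂ) := by
      rw [hYH, Matrix.trace_mul_cycle, hspec, conj_mul_conj hUU, trace_conj_unitary hUU,
        Matrix.diagonal_mul_diagonal, Matrix.trace_diagonal]
      refine Finset.sum_congr rfl fun i _ => ?_
      rw [← Complex.ofReal_mul]
      congr 1
      by_cases hli : lam i = 0
      · simp [hg, hli]
      · have hpos : 0 < lam i := lt_of_le_of_ne (hlam0 i) (Ne.symm hli)
        have hs : Real.sqrt (lam i) ≠ 0 := by positivity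
        simp only [hg, hli, if_false]
        field_simp
        rw [Real.sq_sqrt (hlam0 i)]
    rw [htr, htrS, ← Complex.ofReal_sum, Complex.ofReal_re]

lemma dot_star_self {ι : Type*} [Fintype ι] (w : ι → ℂ) :
    star w ⬝ᵥ w = ((∑ i, ‖w i‖ ^ 2 : ℝ) : ℂ) := by
  push_cast
  simp only [dotProduct, Pi.star_apply, ← Complex.normSq_eq_norm_sq]
  refine Finset.sum_congr rfl fun i _ => ?_
  rw [Complex.star_def, mul_comm, Complex.mul_conj, Complex.normSq_eq_norm_sq]
  norm_cast

/-- Cauchy–Schwarz bound for the pairing of a contraction with a rank-one matrix. -/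
lemma pairing_bound (Y : Matrix m n ℂ) (hY : (1 - Y * Yᴴ).PosSemidef)
    (u : m → ℂ) (v : n → ℂ) :
    ((Yᴴ * Matrix.vecMulVec u v).trace).re ≤
      Real.sqrt (∑ i, ‖u i‖ ^ 2) * Real.sqrt (∑ j, ‖v j‖ ^ 2) := by
  set w : n → ℂ := Yᴴ *ᵥ u with hw
  have htr : (Yᴴ * Matrix.vecMulVec u v).trace = w ⬝ᵥ v := by
    simp only [Matrix.trace, Matrix.diag, Matrix.mul_apply, Matrix.vecMulVec_apply,
      dotProduct, hw, Matrix.mulVec, Finset.sum_mul, mul_assoc]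
  have hsw : star w ⬝ᵥ w = star u ⬝ᵥ ((Y * Yᴴ) *ᵥ u) := by
    rw [hw, Matrix.star_mulVec, Matrix.conjTranspose_conjTranspose, Matrix.dotProduct_mulVec,
      Matrix.dotProduct_mulVec, Matrix.vecMul_vecMul]
  have hwu : (∑ j, ‖w j‖ ^ 2) ≤ ∑ i, ‖u i‖ ^ 2 := by
    have h0 := hY.dotProduct_mulVec_nonneg u
    have h1 : star u ⬝ᵥ ((1 - Y * Yᴴ) *ᵥ u) =
        star u ⬝ᵥ u - star u ⬝ᵥ ((Y * Yᴴ) *ᵥ u) := by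
      rw [Matrix.sub_mulVec, dotProduct_sub, Matrix.one_mulVec]
    rw [h1, ← hsw, dot_star_self, dot_star_self, ← Complex.ofReal_sub] at h0
    linarith [Complex.zero_le_real.mp h0]
  set a : EuclideanSpace ℂ n := (WithLp.equiv 2 (n → ℂ)).symm (star w) with ha
  set b : EuclideanSpace ℂ n := (WithLp.equiv 2 (n → ℂ)).symm v with hb
  have hinner : w ⬝ᵥ v = inner (𝕜 := ℂ) a b := by
    rw [ha, hb]; show w ⬝ᵥ v = v ⬝ᵥ star (star w); rw [star_star, dotProduct_comm]
  have hcs : (w ⬝ᵥ v).re ≤ ‖a‖ * ‖b‖ := by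
    rw [hinner]
    exact (Complex.re_le_norm _).trans (norm_inner_le_norm a b)
  have hna : ‖a‖ = Real.sqrt (∑ j, ‖w j‖ ^ 2) := by
    rw [EuclideanSpace.norm_eq]
    simp [ha]
  have hnb : ‖b‖ = Real.sqrt (∑ j, ‖v j‖ ^ 2) := by
    rw [EuclideanSpace.norm_eq]
    simp [hb]
  calc ((Yᴴ * Matrix.vecMulVec u v).trace).re = (w ⬝ᵥ v).re := by rw [htr]
    _ ≤ ‖a‖ * ‖b‖ := hcs
    _ ≤ Real.sqrt (∑ i, ‖u i‖ ^ 2) * Real.sqrt (∑ j, ‖v j‖ ^ 2) := by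
        rw [hna, hnb]
        exact mul_le_mul_of_nonneg_right (Real.sqrt_le_sqrt hwu) (Real.sqrt_nonneg _)

/-- For a density matrix, the sum of the squared absolute values of the entries is at most `1`. -/
lemma entries_sq_le_one {A : Matrix m m ℂ} (hA : A.PosSemidef)
    (hTr : A.trace = 1) : ∑ p : m × m, ‖A p.1 p.2‖ ^ 2 ≤ 1 := by
  set h : A.IsHermitian := hA.1 with hh
  set U : Matrix m m ℂ := (h.eigenvectorUnitary : Matrix m m ℂ) with hUdef
  set lam : m → ℝ := h.eigenvalues with hlam
  have hlam0 : ∀ i, 0 ≤ lam i := fun i => hA.eigenvalues_nonneg i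
  have hUU : Uᴴ * U = 1 := by
    simpa [hUdef, Matrix.star_eq_conjTranspose] using
      Unitary.coe_star_mul_self h.eigenvectorUnitary
  have hspec : A = U * Matrix.diagonal (fun i => (lam i : ℂ)) * Uᴴ := by
    exact h.spectral_theorem
  have hAA : (A * Aᴴ).trace = ((∑ p : m × m, ‖A p.1 p.2‖ ^ 2 : ℝ) : ℂ) := by
    push_cast
    simp only [Matrix.trace, Matrix.diag, Matrix.mul_apply, Matrix.conjTranspose_apply,
      Fintype.sum_prod_type]
    refine Finset.sum_congr rfl fun i _ => Finset.sum_congr rfl fun j _ => ?_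
    rw [Complex.star_def, Complex.mul_conj, Complex.normSq_eq_norm_sq]
    norm_cast
  have hAA2 : (A * Aᴴ).trace = ((∑ i, lam i * lam i : ℝ) : ℂ) := by
    conv_lhs => rw [h.eq, hspec, conj_mul_conj hUU]
    rw [Matrix.diagonal_mul_diagonal, trace_conj_unitary hUU, Matrix.trace_diagonal]
    push_cast
    rfl
  have hsumlam : ∑ i, lam i = 1 := by
    have : A.trace = ((∑ i, lam i : ℝ) : ℂ) := by
      conv_lhs => rw [hspec]
      rw [trace_conj_unitary hUU, Matrix.trace_diagonal]
      push_cast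
      rfl
    rw [hTr] at this
    exact_mod_cast this.symm
  have hsq : ∑ p : m × m, ‖A p.1 p.2‖ ^ 2 = ∑ i, lam i * lam i := by
    have := hAA.symm.trans hAA2
    exact_mod_cast this
  rw [hsq, ← hsumlam]
  refine Finset.sum_le_sum fun i _ => ?_
  have hle : lam i ≤ 1 := by
    rw [← hsumlam]
    exact Finset.single_le_sum (fun j _ => hlam0 j) (Finset.mem_univ i)
  nlinarith [hlam0 i]

end CCNRAux

/-- CCNR criterion: every separable density matrix satisfies `‖R(ρ)‖₁ ≤ 1`; hence a
state with `‖R(ρ)‖₁ > 1` is entangled (not separable). -/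
theorem ccnr_criterion (dA dB : ℕ)
    (ρ : Matrix (Fin dA × Fin dB) (Fin dA × Fin dB) ℂ) :
    (SeparableState dA dB ρ → traceNorm (realignRect dA dB ρ) ≤ 1) ∧
    (1 < traceNorm (realignRect dA dB ρ) → ¬ SeparableState dA dB ρ) := by
  have main : SeparableState dA dB ρ → traceNorm (realignRect dA dB ρ) ≤ 1 := by
    rintro ⟨K, p, A, B, hp, hpsum, hA, hB, hrho⟩
    set u : Fin K → (Fin dA × Fin dA) → ℂ := fun k q => A k q.1 q.2 with hu
    set v : Fin K → (Fin dB × Fin dB) → ℂ := fun k q => B k q.1 q.2 with hv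
    have hre : realignRect dA dB ρ
        = ∑ k, ((p k : ℝ) : ℂ) • Matrix.vecMulVec (u k) (v k) := by
      subst hrho
      ext q r
      simp [realignRect, Matrix.vecMulVec_apply, Matrix.sum_apply,
        Matrix.kroneckerMap_apply, hu, hv]
    obtain ⟨Y, hY, hYX⟩ := CCNRAux.exists_dual (realignRect dA dB ρ)
    rw [← hYX]
    have hexp : (Yᴴ * realignRect dA dB ρ).trace
        = ∑ k, ((p k : ℝ) : ℂ) * (Yᴴ * Matrix.vecMulVec (u k) (v k)).trace := by
      rw [hre, Matrix.mul_sum, Matrix.trace_sum]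
      refine Finset.sum_congr rfl fun k _ => ?_
      rw [Matrix.mul_smul, Matrix.trace_smul, smul_eq_mul]
    rw [hexp, Complex.re_sum]
    have hterm : ∀ k, (((p k : ℝ) : ℂ) * (Yᴴ * Matrix.vecMulVec (u k) (v k)).trace).re
        ≤ p k := by
      intro k
      rw [Complex.re_ofReal_mul]
      have hbd := CCNRAux.pairing_bound Y hY (u k) (v k)
      have hua : Real.sqrt (∑ i, ‖u k i‖ ^ 2) ≤ 1 := by
        refine Real.sqrt_le_one.mpr ?_
        exact CCNRAux.entries_sq_le_one (hA k).1 (hA k).2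
      have hvb : Real.sqrt (∑ j, ‖v k j‖ ^ 2) ≤ 1 := by
        refine Real.sqrt_le_one.mpr ?_
        exact CCNRAux.entries_sq_le_one (hB k).1 (hB k).2
      have h1 : ((Yᴴ * Matrix.vecMulVec (u k) (v k)).trace).re ≤ 1 := by
        refine hbd.trans ?_
        calc Real.sqrt (∑ i, ‖u k i‖ ^ 2) * Real.sqrt (∑ j, ‖v k j‖ ^ 2)
            ≤ 1 * 1 := by
              exact mul_le_mul hua hvb (Real.sqrt_nonneg _) zero_le_one
          _ = 1 := by ring
      calc p k * ((Yᴴ * Matrix.vecMulVec (u k) (v k)).trace).re ≤ p k * 1 :=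
            mul_le_mul_of_nonneg_left h1 (hp k)
        _ = p k := by ring
    calc ∑ k, (((p k : ℝ) : ℂ) * (Yᴴ * Matrix.vecMulVec (u k) (v k)).trace).re
        ≤ ∑ k, p k := Finset.sum_le_sum fun k _ => hterm k
      _ = 1 := hpsum
  exact ⟨main, fun hlt hsep => absurd (main hsep) (not_le.mpr hlt)⟩
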